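/- Let f(u) = u + ∑_{k≥1} f_k u^{k+1} be the exponential of the formal group law F_b(u₁,u₂) = u₁c(u₂)+u₂c(u₁)-a u₁u₂ - ((d(u₁)-d(u₂))/(u₁c(u₂)-u₂c(u₁)))·u₁²u₂² over a graded Q-algebra, where c(u) = 1 + ∑_{j≥2}c_ju^j and d(u) = ∑_{k≥1}d_ku^k. Then modulo decomposable elements (products of positive-degree generators): 2f₁ ≡ -a, 3f₂ ≡ c₂, 4f₃ ≡ c₃, 6f₃ ≡ -d₁, 5f₄ ≡ c₄, 10f₄ ≡ -d₂, and f_k ≡ 0 (decomposable) for k ≥ 5. -/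

import Mathlib

open MvPowerSeries

/-- Substitution of a multivariate power series `g` (with zero constant term) into a
one-variable power series `f`: `psCompMv f g = f(g)`. -/
noncomputable def psCompMv {A : Type*} [CommSemiring A] {σ : Type*}
    (f : PowerSeries A) (g : MvPowerSeries σ A) : MvPowerSeries σ A :=
  fun m => ∑ k ∈ Finset.range (Finsupp.sum m (fun _ e => e) + 1),
    PowerSeries.coeff (R := A) k f * MvPowerSeries.coeff (R := A) m (g ^ k)

section Aux

variable {B : Type*} [CommRing B] {σ : Type*}

theorem aux_coeff_psCompMv (f : PowerSeries B) (g : MvPowerSeries σ B) (m : σ →₀ ℕ) :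
    MvPowerSeries.coeff (R := B) m (psCompMv f g)
      = ∑ k ∈ Finset.range (Finsupp.sum m (fun _ e => e) + 1),
          PowerSeries.coeff (R := B) k f * MvPowerSeries.coeff (R := B) m (g ^ k) := rfl

theorem aux_map_psCompMv {C : Type*} [CommRing C] (π : B →+* C) (f : PowerSeries B)
    (g : MvPowerSeries σ B) :
    MvPowerSeries.map π (psCompMv f g)
      = psCompMv (PowerSeries.map π f) (MvPowerSeries.map π g) := by
  ext m
  rw [MvPowerSeries.coeff_map, aux_coeff_psCompMv, aux_coeff_psCompMv, map_sum]
  refine Finset.sum_congr rfl fun k _ => ?_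
  rw [map_mul, PowerSeries.coeff_map, ← map_pow, MvPowerSeries.coeff_map]

theorem aux_psCompMv_add (f f' : PowerSeries B) (g : MvPowerSeries σ B) :
    psCompMv (f + f') g = psCompMv f g + psCompMv f' g := by
  ext m
  rw [map_add, aux_coeff_psCompMv, aux_coeff_psCompMv, aux_coeff_psCompMv,
    ← Finset.sum_add_distrib]
  exact Finset.sum_congr rfl fun k _ => by rw [map_add, add_mul]

theorem aux_psCompMv_one (g : MvPowerSeries σ B) : psCompMv (1 : PowerSeries B) g = 1 := by
  ext m
  rw [aux_coeff_psCompMv, Finset.sum_eq_single 0]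
  · simp
  · intro k _ hk
    rw [PowerSeries.coeff_one, if_neg hk, zero_mul]
  · intro h
    exact absurd (Finset.mem_range.mpr (Nat.succ_pos _)) h

theorem aux_sum_eq_zero_imp {m : σ →₀ ℕ} (h : Finsupp.sum m (fun _ e => e) = 0) : m = 0 := by
  ext s
  by_contra hs
  exact hs (Finset.sum_eq_zero_iff.mp h s (Finsupp.mem_support_iff.mpr hs))

theorem aux_psCompMv_X (g : MvPowerSeries σ B) (hg : MvPowerSeries.coeff (R := B) 0 g = 0) :
    psCompMv (PowerSeries.X : PowerSeries B) g = g := by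
  ext m
  rw [aux_coeff_psCompMv]
  rcases Nat.eq_zero_or_pos (Finsupp.sum m fun _ e => e) with h0 | hpos
  · have hm := aux_sum_eq_zero_imp h0
    subst hm
    simp [h0, PowerSeries.coeff_X, hg]
  · rw [Finset.sum_eq_single 1]
    · rw [PowerSeries.coeff_X, if_pos rfl, one_mul, pow_one]
    · intro k _ hk
      rw [PowerSeries.coeff_X, if_neg hk, zero_mul]
    · intro h
      exact absurd (Finset.mem_range.mpr (by omega)) h

theorem aux_memK_mul {K : Ideal B} {s : MvPowerSeries σ B}
    (hs : ∀ m, MvPowerSeries.coeff (R := B) m s ∈ K) (t : MvPowerSeries σ B) :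
    ∀ m, MvPowerSeries.coeff (R := B) m (t * s) ∈ K := by
  classical
  intro m
  rw [MvPowerSeries.coeff_mul]
  exact Ideal.sum_mem _ fun x _ => Ideal.mul_mem_left _ _ (hs _)

theorem aux_memK_mul' {K : Ideal B} {s : MvPowerSeries σ B}
    (hs : ∀ m, MvPowerSeries.coeff (R := B) m s ∈ K) (t : MvPowerSeries σ B) :
    ∀ m, MvPowerSeries.coeff (R := B) m (s * t) ∈ K := by
  rw [mul_comm]; exact aux_memK_mul hs t

theorem aux_mul_eq_zero {K : Ideal B} (hK : ∀ x ∈ K, ∀ y ∈ K, x * y = 0)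
    {s t : MvPowerSeries σ B} (hs : ∀ m, MvPowerSeries.coeff (R := B) m s ∈ K)
    (ht : ∀ m, MvPowerSeries.coeff (R := B) m t ∈ K) : s * t = 0 := by
  classical
  ext m
  rw [MvPowerSeries.coeff_mul, map_zero]
  exact Finset.sum_eq_zero fun x _ => hK _ (hs _) _ (ht _)

theorem aux_memK_psCompMv {K : Ideal B} {p : PowerSeries B}
    (hp : ∀ k, PowerSeries.coeff (R := B) k p ∈ K) (g : MvPowerSeries σ B) :
    ∀ m, MvPowerSeries.coeff (R := B) m (psCompMv p g) ∈ K := by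
  intro m
  rw [aux_coeff_psCompMv]
  exact Ideal.sum_mem _ fun k _ => Ideal.mul_mem_right _ _ (hp k)

theorem aux_psCompMv_congr {K : Ideal B} (hK : ∀ x ∈ K, ∀ y ∈ K, x * y = 0)
    {p : PowerSeries B} (hp : ∀ k, PowerSeries.coeff (R := B) k p ∈ K)
    {g g' : MvPowerSeries σ B} (h : ∀ m, MvPowerSeries.coeff (R := B) m (g - g') ∈ K) :
    psCompMv p g = psCompMv p g' := by
  have hpow : ∀ k m, MvPowerSeries.coeff (R := B) m (g ^ k - g' ^ k) ∈ K := by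
    intro k
    induction k with
    | zero => intro m; simp
    | succ n ih =>
      intro m
      have he : g ^ (n + 1) - g' ^ (n + 1) = g ^ n * (g - g') + (g ^ n - g' ^ n) * g' := by ring
      rw [he, map_add]
      exact add_mem (aux_memK_mul h _ m) (aux_memK_mul' ih _ m)
  ext m
  rw [aux_coeff_psCompMv, aux_coeff_psCompMv]
  refine Finset.sum_congr rfl fun k _ => ?_
  have h0 : PowerSeries.coeff (R := B) k p
      * (MvPowerSeries.coeff (R := B) m (g ^ k) - MvPowerSeries.coeff (R := B) m (g' ^ k)) = 0 := by
    have hh := hpow k m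
    rw [map_sub] at hh
    exact hK _ (hp k) _ hh
  linear_combination h0

theorem aux_coeff_psCompMv_X_single [DecidableEq σ] (p : PowerSeries B) (i : σ) (n : ℕ) :
    MvPowerSeries.coeff (R := B) (Finsupp.single i n) (psCompMv p (X i)) = PowerSeries.coeff (R := B) n p := by
  rw [aux_coeff_psCompMv]
  have hdeg : Finsupp.sum (Finsupp.single i n) (fun _ e => e) = n :=
    Finsupp.sum_single_index rfl
  rw [hdeg, Finset.sum_eq_single n]
  · rw [MvPowerSeries.coeff_X_pow, if_pos rfl, mul_one]
  · intro k _ hk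
    rw [MvPowerSeries.coeff_X_pow, if_neg (fun h => hk (Finsupp.single_injective i h).symm),
      mul_zero]
  · intro h
    exact absurd (Finset.self_mem_range_succ n) h

theorem aux_coeff_psCompMv_X_ne [DecidableEq σ] (p : PowerSeries B) {i j : σ} (hij : j ≠ i)
    (m : σ →₀ ℕ) (hm : m j ≠ 0) :
    MvPowerSeries.coeff (R := B) m (psCompMv p (X i)) = 0 := by
  rw [aux_coeff_psCompMv]
  refine Finset.sum_eq_zero fun k _ => ?_
  rw [MvPowerSeries.coeff_X_pow, if_neg, mul_zero]
  intro h
  exact hm (by rw [h, Finsupp.single_apply, if_neg (fun hh => hij hh.symm)])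

end Aux

/-- the exponent of the monomial `u₁^x u₂^y` -/
noncomputable def mon (x y : ℕ) : Fin 2 →₀ ℕ := Finsupp.single 0 x + Finsupp.single 1 y

theorem mon_apply0 (x y : ℕ) : mon x y 0 = x := by
  simp [mon, Finsupp.single_apply]

theorem mon_apply1 (x y : ℕ) : mon x y 1 = y := by
  simp [mon, Finsupp.single_apply]

theorem mon_eq_iff {x y x' y' : ℕ} : mon x y = mon x' y' ↔ x = x' ∧ y = y' := by
  constructor
  · intro h
    exact ⟨by rw [← mon_apply0 x y, h, mon_apply0], by rw [← mon_apply1 x y, h, mon_apply1]⟩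
  · rintro ⟨rfl, rfl⟩; rfl

theorem single0_eq_mon (n : ℕ) : Finsupp.single (0 : Fin 2) n = mon n 0 := by simp [mon]

theorem single1_eq_mon (n : ℕ) : Finsupp.single (1 : Fin 2) n = mon 0 n := by simp [mon]

theorem mon_degree (x y : ℕ) : Finsupp.sum (mon x y) (fun _ e => e) = x + y := by
  rw [mon, Finsupp.sum_add_index' (fun _ => rfl) (fun _ _ _ => rfl),
    Finsupp.sum_single_index rfl, Finsupp.sum_single_index rfl]

section Aux2

variable {B : Type*} [CommRing B]

theorem single0_le_mon {n x y : ℕ} : Finsupp.single (0 : Fin 2) n ≤ mon x y ↔ n ≤ x := by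
  rw [Finsupp.le_def, Fin.forall_fin_two]
  simp [Finsupp.single_apply, mon_apply0, mon_apply1]

theorem single1_le_mon {n x y : ℕ} : Finsupp.single (1 : Fin 2) n ≤ mon x y ↔ n ≤ y := by
  rw [Finsupp.le_def, Fin.forall_fin_two]
  simp [Finsupp.single_apply, mon_apply0, mon_apply1]

theorem mon_sub_single0 (x y n : ℕ) : mon x y - Finsupp.single 0 n = mon (x - n) y := by
  ext s
  rw [Finsupp.tsub_apply]
  fin_cases s <;> simp [mon, Finsupp.add_apply, Finsupp.single_apply]

theorem mon_sub_single1 (x y n : ℕ) : mon x y - Finsupp.single 1 n = mon x (y - n) := by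
  ext s
  rw [Finsupp.tsub_apply]
  fin_cases s <;> simp [mon, Finsupp.add_apply, Finsupp.single_apply]

theorem aux_coeff_mul_X0 (s : MvPowerSeries (Fin 2) B) (x y : ℕ) :
    MvPowerSeries.coeff (R := B) (mon x y) (s * X 0)
      = if 1 ≤ x then MvPowerSeries.coeff (R := B) (mon (x - 1) y) s else 0 := by
  rw [X_def, coeff_mul_monomial]
  by_cases h : 1 ≤ x
  · rw [if_pos (single0_le_mon.mpr h), if_pos h, mon_sub_single0, mul_one]
  · rw [if_neg (fun hh => h (single0_le_mon.mp hh)), if_neg h]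

theorem aux_coeff_mul_X1 (s : MvPowerSeries (Fin 2) B) (x y : ℕ) :
    MvPowerSeries.coeff (R := B) (mon x y) (s * X 1)
      = if 1 ≤ y then MvPowerSeries.coeff (R := B) (mon x (y - 1)) s else 0 := by
  rw [X_def, coeff_mul_monomial]
  by_cases h : 1 ≤ y
  · rw [if_pos (single1_le_mon.mpr h), if_pos h, mon_sub_single1, mul_one]
  · rw [if_neg (fun hh => h (single1_le_mon.mp hh)), if_neg h]

theorem aux_coeff_mul_M22 (s : MvPowerSeries (Fin 2) B) (x y : ℕ) :
    MvPowerSeries.coeff (R := B) (mon x y) (s * (X 0 ^ 2 * X 1 ^ 2))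
      = if 2 ≤ x ∧ 2 ≤ y then MvPowerSeries.coeff (R := B) (mon (x - 2) (y - 2)) s else 0 := by
  rw [← mul_assoc, X_pow_eq 1 2, coeff_mul_monomial]
  by_cases hy : 2 ≤ y
  · rw [if_pos (single1_le_mon.mpr hy), mon_sub_single1, mul_one, X_pow_eq, coeff_mul_monomial]
    by_cases hx : 2 ≤ x
    · rw [if_pos (single0_le_mon.mpr hx), mon_sub_single0, mul_one, if_pos ⟨hx, hy⟩]
    · rw [if_neg (fun hh => hx (single0_le_mon.mp hh)), if_neg (fun hh => hx hh.1)]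
  · rw [if_neg (fun hh => hy (single1_le_mon.mp hh)), if_neg (fun hh => hy hh.2)]

theorem aux_coeff_addpow (x y k : ℕ) :
    MvPowerSeries.coeff (R := B) (mon x y) ((X 0 + X 1 : MvPowerSeries (Fin 2) B) ^ k)
      = if x + y = k then (Nat.choose k x : B) else 0 := by
  rw [add_pow, map_sum]
  have hterm : ∀ j, MvPowerSeries.coeff (R := B) (mon x y)
      ((X 0 : MvPowerSeries (Fin 2) B) ^ j * X 1 ^ (k - j)
        * (Nat.choose k j : MvPowerSeries (Fin 2) B))
      = if x = j ∧ y = k - j then (Nat.choose k j : B) else 0 := by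
    intro j
    have hc : (Nat.choose k j : MvPowerSeries (Fin 2) B) = C (σ := Fin 2) (R := B) (Nat.choose k j : B) := by
      rw [map_natCast]
    rw [hc, X_pow_eq, X_pow_eq, monomial_mul_monomial, coeff_mul_C, one_mul, coeff_monomial]
    have hiff : (mon x y = Finsupp.single 0 j + Finsupp.single 1 (k - j))
        ↔ (x = j ∧ y = k - j) := by
      rw [show Finsupp.single (0 : Fin 2) j + Finsupp.single 1 (k - j) = mon j (k - j) from rfl,
        mon_eq_iff]
    by_cases h : x = j ∧ y = k - j
    · rw [if_pos (hiff.mpr h), if_pos h, one_mul]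
    · rw [if_neg (fun hh => h (hiff.mp hh)), if_neg h, zero_mul]
  rw [Finset.sum_congr rfl fun j _ => hterm j]
  by_cases hk : x + y = k
  · rw [if_pos hk, Finset.sum_eq_single x]
    · rw [if_pos ⟨rfl, by omega⟩]
    · intro j _ hj
      rw [if_neg (fun hh : x = j ∧ y = k - j => hj hh.1.symm)]
    · intro h
      exact absurd (Finset.mem_range.mpr (by omega)) h
  · rw [if_neg hk]
    refine Finset.sum_eq_zero fun j hj => ?_
    rw [Finset.mem_range] at hj
    rw [if_neg]
    rintro ⟨rfl, rfl⟩
    omega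

theorem aux_coeff_psCompMv_X01 (p : PowerSeries B) (x y : ℕ) :
    MvPowerSeries.coeff (R := B) (mon x y) (psCompMv p (X 0 + X 1 : MvPowerSeries (Fin 2) B))
      = (Nat.choose (x + y) x : B) * PowerSeries.coeff (R := B) (x + y) p := by
  rw [aux_coeff_psCompMv, mon_degree, Finset.sum_eq_single (x + y)]
  · rw [aux_coeff_addpow, if_pos rfl, mul_comm]
  · intro k _ hk
    rw [aux_coeff_addpow, if_neg (fun h => hk h.symm), mul_zero]
  · intro h
    exact absurd (Finset.self_mem_range_succ _) h

theorem aux_coeff_psCompMv_X0_mon (p : PowerSeries B) (x y : ℕ) :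
    MvPowerSeries.coeff (R := B) (mon x y) (psCompMv p (X 0 : MvPowerSeries (Fin 2) B))
      = if y = 0 then PowerSeries.coeff (R := B) x p else 0 := by
  by_cases hy : y = 0
  · subst hy
    rw [if_pos rfl, ← single0_eq_mon, aux_coeff_psCompMv_X_single]
  · rw [if_neg hy]
    exact aux_coeff_psCompMv_X_ne p (show (1 : Fin 2) ≠ 0 by decide) _
      (by rw [mon_apply1]; exact hy)

theorem aux_coeff_psCompMv_X1_mon (p : PowerSeries B) (x y : ℕ) :
    MvPowerSeries.coeff (R := B) (mon x y) (psCompMv p (X 1 : MvPowerSeries (Fin 2) B))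
      = if x = 0 then PowerSeries.coeff (R := B) y p else 0 := by
  by_cases hx : x = 0
  · subst hx
    rw [if_pos rfl, ← single1_eq_mon, aux_coeff_psCompMv_X_single]
  · rw [if_neg hx]
    exact aux_coeff_psCompMv_X_ne p (show (0 : Fin 2) ≠ 1 by decide) _
      (by rw [mon_apply0]; exact hx)

theorem aux_coeff_C_mul_X01 (a' : B) (x y : ℕ) :
    MvPowerSeries.coeff (R := B) (mon x y) (C (σ := Fin 2) (R := B) a' * (X 0 * X 1))
      = if x = 1 ∧ y = 1 then a' else 0 := by
  have h : C (σ := Fin 2) (R := B) a' * (X 0 * X 1) = monomial (R := B) (mon 1 1) a' := by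
    rw [X_def, X_def, monomial_mul_monomial, ← monomial_zero_eq_C_apply, monomial_mul_monomial]
    rw [show (0 : Fin 2 →₀ ℕ) + (Finsupp.single 0 1 + Finsupp.single 1 1) = mon 1 1 from by
      rw [zero_add]; rfl]
    rw [mul_one, mul_one]
  rw [h, coeff_monomial]
  by_cases hxy : x = 1 ∧ y = 1
  · rw [if_pos hxy, if_pos (mon_eq_iff.mpr hxy)]
  · rw [if_neg hxy, if_neg (fun hh => hxy (mon_eq_iff.mp hh))]

end Aux2

set_option maxHeartbeats 4000000 in
/-- Let `f(u) = u + ∑_{k≥1} f_k u^{k+1}` be the exponential of the Buchstaber–Krichever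
formal group law
`F_b(u₁,u₂) = u₁c(u₂) + u₂c(u₁) - a·u₁u₂ - ((d(u₁)-d(u₂))/(u₁c(u₂)-u₂c(u₁)))·u₁²u₂²`,
where `c(u) = 1 + ∑_{j≥2} c_j u^j` and `d(u) = ∑_{k≥1} d_k u^k`, over an augmented
`ℚ`-algebra `(A, ε)` whose generators `a, c_j, d_k, f_k` of positive degree lie in the
augmentation ideal `J = ker ε`. Then modulo decomposables (the ideal `J·J`):
`2f₁ ≡ -a`, `3f₂ ≡ c₂`, `4f₃ ≡ c₃`, `6f₃ ≡ -d₁`, `5f₄ ≡ c₄`, `10f₄ ≡ -d₂`, and `f_k ≡ 0`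
for `k ≥ 5`. (The exponential identity `f(u₁+u₂) = F_b(f(u₁),f(u₂))` is stated in the
cleared form, multiplied by `f(u₁)c(f(u₂)) - f(u₂)c(f(u₁))`.) -/
theorem stmt_17 {A : Type*} [CommRing A] [Algebra ℚ A] (ε : A →ₐ[ℚ] ℚ)
    (a : A) (c d fc : ℕ → A)
    (ha : a ∈ RingHom.ker (ε : A →+* ℚ))
    (hcJ : ∀ j, c j ∈ RingHom.ker (ε : A →+* ℚ))
    (hdJ : ∀ k, d k ∈ RingHom.ker (ε : A →+* ℚ))
    (hfJ : ∀ k, fc k ∈ RingHom.ker (ε : A →+* ℚ))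
    -- the series f, c, d
    (fS cS dS : PowerSeries A)
    (hfS : fS = PowerSeries.mk fun n => if n = 0 then 0 else if n = 1 then 1 else fc (n - 1))
    (hcS : cS = PowerSeries.mk fun j => if j = 0 then 1 else if j = 1 then 0 else c j)
    (hdS : dS = PowerSeries.mk fun k => if k = 0 then 0 else d k)
    -- the exponential identity f(u₁+u₂) = F_b(f(u₁), f(u₂)), cleared of denominators
    (hexp : psCompMv fS (X 0 + X 1) *
        (psCompMv fS (X 0) * psCompMv cS (psCompMv fS (X 1))
          - psCompMv fS (X 1) * psCompMv cS (psCompMv fS (X 0)))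
      = (psCompMv fS (X 0) * psCompMv cS (psCompMv fS (X 1))
          + psCompMv fS (X 1) * psCompMv cS (psCompMv fS (X 0))
          - MvPowerSeries.C (σ := Fin 2) (R := A) a * (psCompMv fS (X 0) * psCompMv fS (X 1))) *
          (psCompMv fS (X 0) * psCompMv cS (psCompMv fS (X 1))
            - psCompMv fS (X 1) * psCompMv cS (psCompMv fS (X 0)))
        - (psCompMv dS (psCompMv fS (X 0)) - psCompMv dS (psCompMv fS (X 1))) *
            (psCompMv fS (X 0) ^ 2 * psCompMv fS (X 1) ^ 2)) :
    2 * fc 1 + a ∈ RingHom.ker (ε : A →+* ℚ) * RingHom.ker (ε : A →+* ℚ) ∧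
    3 * fc 2 - c 2 ∈ RingHom.ker (ε : A →+* ℚ) * RingHom.ker (ε : A →+* ℚ) ∧
    4 * fc 3 - c 3 ∈ RingHom.ker (ε : A →+* ℚ) * RingHom.ker (ε : A →+* ℚ) ∧
    6 * fc 3 + d 1 ∈ RingHom.ker (ε : A →+* ℚ) * RingHom.ker (ε : A →+* ℚ) ∧
    5 * fc 4 - c 4 ∈ RingHom.ker (ε : A →+* ℚ) * RingHom.ker (ε : A →+* ℚ) ∧
    10 * fc 4 + d 2 ∈ RingHom.ker (ε : A →+* ℚ) * RingHom.ker (ε : A →+* ℚ) ∧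
    ∀ k, 5 ≤ k → fc k ∈ RingHom.ker (ε : A →+* ℚ) * RingHom.ker (ε : A →+* ℚ) := by
  classical
  set J : Ideal A := RingHom.ker (ε : A →+* ℚ) with hJ
  set I : Ideal A := J * J with hI
  set π : A →+* A ⧸ I := Ideal.Quotient.mk I with hπ
  set K : Ideal (A ⧸ I) := Ideal.map π J with hK
  have hKK : ∀ x ∈ K, ∀ y ∈ K, x * y = 0 := by
    intro x hx y hy
    have hmem : x * y ∈ K * K := Ideal.mul_mem_mul hx hy
    rw [hK, ← Ideal.map_mul, ← hI, hπ, Ideal.map_quotient_self] at hmem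
    exact Ideal.mem_bot.mp hmem
  have hmem0 : ∀ z : A, π z = 0 → z ∈ I := by
    intro z h
    rw [hπ] at h
    exact Ideal.Quotient.eq_zero_iff_mem.mp h
  have hKmem : ∀ z ∈ J, π z ∈ K := fun z hz => Ideal.mem_map_of_mem π hz
  -- map the exponential identity to the quotient
  have hexpB := congrArg (fun z => MvPowerSeries.map π z) hexp
  simp only [map_mul, map_sub, map_add, map_pow, aux_map_psCompMv, MvPowerSeries.map_X,
    MvPowerSeries.map_C] at hexpB
  -- the reduced series
  set φ : PowerSeries (A ⧸ I) := PowerSeries.map π fS - PowerSeries.X with hφ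
  set γ : PowerSeries (A ⧸ I) := PowerSeries.map π cS - 1 with hγ
  set δ : PowerSeries (A ⧸ I) := PowerSeries.map π dS with hδ
  have hΦv : ∀ n : ℕ, 2 ≤ n → PowerSeries.coeff (R := A ⧸ I) n φ = π (fc (n - 1)) := by
    intro n hn
    rw [hφ, map_sub, PowerSeries.coeff_map, hfS, PowerSeries.coeff_mk, PowerSeries.coeff_X,
      if_neg (by omega : ¬ n = 0), if_neg (by omega : ¬ n = 1), if_neg (by omega : ¬ n = 1),
      sub_zero]
  have hΦ0 : PowerSeries.coeff (R := A ⧸ I) 0 φ = 0 := by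
    rw [hφ, map_sub, PowerSeries.coeff_map, hfS, PowerSeries.coeff_mk]
    simp
  have hΦ1 : PowerSeries.coeff (R := A ⧸ I) 1 φ = 0 := by
    rw [hφ, map_sub, PowerSeries.coeff_map, hfS, PowerSeries.coeff_mk]
    simp
  have hΦK : ∀ k, PowerSeries.coeff (R := A ⧸ I) k φ ∈ K := by
    intro k
    match k, (by omega : k = 0 ∨ k = 1 ∨ 2 ≤ k) with
    | _, Or.inl rfl => rw [hΦ0]; exact zero_mem K
    | _, Or.inr (Or.inl rfl) => rw [hΦ1]; exact zero_mem K
    | k, Or.inr (Or.inr hk) => rw [hΦv k hk]; exact hKmem _ (hfJ _)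
  have hΓv : ∀ n : ℕ, 2 ≤ n → PowerSeries.coeff (R := A ⧸ I) n γ = π (c n) := by
    intro n hn
    rw [hγ, map_sub, PowerSeries.coeff_map, hcS, PowerSeries.coeff_mk, PowerSeries.coeff_one,
      if_neg (by omega : ¬ n = 0), if_neg (by omega : ¬ n = 1), if_neg (by omega : ¬ n = 0),
      sub_zero]
  have hΓ0 : PowerSeries.coeff (R := A ⧸ I) 0 γ = 0 := by
    rw [hγ, map_sub, PowerSeries.coeff_map, hcS, PowerSeries.coeff_mk]
    simp
  have hΓ1 : PowerSeries.coeff (R := A ⧸ I) 1 γ = 0 := by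
    rw [hγ, map_sub, PowerSeries.coeff_map, hcS, PowerSeries.coeff_mk]
    simp
  have hΓK : ∀ k, PowerSeries.coeff (R := A ⧸ I) k γ ∈ K := by
    intro k
    match k, (by omega : k = 0 ∨ k = 1 ∨ 2 ≤ k) with
    | _, Or.inl rfl => rw [hΓ0]; exact zero_mem K
    | _, Or.inr (Or.inl rfl) => rw [hΓ1]; exact zero_mem K
    | k, Or.inr (Or.inr hk) => rw [hΓv k hk]; exact hKmem _ (hcJ _)
  have hΔv : ∀ n : ℕ, 1 ≤ n → PowerSeries.coeff (R := A ⧸ I) n δ = π (d n) := by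
    intro n hn
    rw [hδ, PowerSeries.coeff_map, hdS, PowerSeries.coeff_mk, if_neg (by omega : ¬ n = 0)]
  have hΔ0 : PowerSeries.coeff (R := A ⧸ I) 0 δ = 0 := by
    rw [hδ, PowerSeries.coeff_map, hdS, PowerSeries.coeff_mk]
    simp
  have hΔK : ∀ k, PowerSeries.coeff (R := A ⧸ I) k δ ∈ K := by
    intro k
    match k, (by omega : k = 0 ∨ 1 ≤ k) with
    | _, Or.inl rfl => rw [hΔ0]; exact zero_mem K
    | k, Or.inr hk => rw [hΔv k hk]; exact hKmem _ (hdJ _)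
  -- decompose the compositions
  have hF0 : psCompMv (PowerSeries.map π fS) (X 0 : MvPowerSeries (Fin 2) (A ⧸ I))
      = X 0 + psCompMv φ (X 0) := by
    conv_lhs => rw [show PowerSeries.map π fS = PowerSeries.X + φ from by rw [hφ]; ring]
    rw [aux_psCompMv_add, aux_psCompMv_X _ (MvPowerSeries.coeff_zero_X 0)]
  have hF1 : psCompMv (PowerSeries.map π fS) (X 1 : MvPowerSeries (Fin 2) (A ⧸ I))
      = X 1 + psCompMv φ (X 1) := by
    conv_lhs => rw [show PowerSeries.map π fS = PowerSeries.X + φ from by rw [hφ]; ring]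
    rw [aux_psCompMv_add, aux_psCompMv_X _ (MvPowerSeries.coeff_zero_X 1)]
  have hF01 : psCompMv (PowerSeries.map π fS) (X 0 + X 1 : MvPowerSeries (Fin 2) (A ⧸ I))
      = (X 0 + X 1) + psCompMv φ (X 0 + X 1) := by
    conv_lhs => rw [show PowerSeries.map π fS = PowerSeries.X + φ from by rw [hφ]; ring]
    rw [aux_psCompMv_add, aux_psCompMv_X]
    rw [map_add, MvPowerSeries.coeff_zero_X, MvPowerSeries.coeff_zero_X, add_zero]
  have hq0 : psCompMv (PowerSeries.map π cS)
      (psCompMv (PowerSeries.map π fS) (X 0 : MvPowerSeries (Fin 2) (A ⧸ I)))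
      = 1 + psCompMv γ (X 0) := by
    conv_lhs => rw [show PowerSeries.map π cS = 1 + γ from by rw [hγ]; ring]
    rw [aux_psCompMv_add, aux_psCompMv_one]
    congr 1
    refine aux_psCompMv_congr hKK hΓK (fun m => ?_)
    rw [hF0, add_sub_cancel_left]
    exact aux_memK_psCompMv hΦK (X 0) m
  have hq1 : psCompMv (PowerSeries.map π cS)
      (psCompMv (PowerSeries.map π fS) (X 1 : MvPowerSeries (Fin 2) (A ⧸ I)))
      = 1 + psCompMv γ (X 1) := by
    conv_lhs => rw [show PowerSeries.map π cS = 1 + γ from by rw [hγ]; ring]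
    rw [aux_psCompMv_add, aux_psCompMv_one]
    congr 1
    refine aux_psCompMv_congr hKK hΓK (fun m => ?_)
    rw [hF1, add_sub_cancel_left]
    exact aux_memK_psCompMv hΦK (X 1) m
  have hr0 : psCompMv δ
      (psCompMv (PowerSeries.map π fS) (X 0 : MvPowerSeries (Fin 2) (A ⧸ I)))
      = psCompMv δ (X 0) := by
    refine aux_psCompMv_congr hKK hΔK (fun m => ?_)
    rw [hF0, add_sub_cancel_left]
    exact aux_memK_psCompMv hΦK (X 0) m
  have hr1 : psCompMv δ
      (psCompMv (PowerSeries.map π fS) (X 1 : MvPowerSeries (Fin 2) (A ⧸ I)))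
      = psCompMv δ (X 1) := by
    refine aux_psCompMv_congr hKK hΔK (fun m => ?_)
    rw [hF1, add_sub_cancel_left]
    exact aux_memK_psCompMv hΦK (X 1) m
  rw [hq0, hq1, hr0, hr1, hF0, hF1, hF01] at hexpB
  set p0 := psCompMv φ (X 0 : MvPowerSeries (Fin 2) (A ⧸ I)) with hp0d
  set p1 := psCompMv φ (X 1 : MvPowerSeries (Fin 2) (A ⧸ I)) with hp1d
  set p2 := psCompMv φ (X 0 + X 1 : MvPowerSeries (Fin 2) (A ⧸ I)) with hp2d
  set q0 := psCompMv γ (X 0 : MvPowerSeries (Fin 2) (A ⧸ I)) with hq0d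
  set q1 := psCompMv γ (X 1 : MvPowerSeries (Fin 2) (A ⧸ I)) with hq1d
  set r0 := psCompMv δ (X 0 : MvPowerSeries (Fin 2) (A ⧸ I)) with hr0d
  set r1 := psCompMv δ (X 1 : MvPowerSeries (Fin 2) (A ⧸ I)) with hr1d
  have hp0K : ∀ m, MvPowerSeries.coeff (R := A ⧸ I) m p0 ∈ K := by
    rw [hp0d]; exact aux_memK_psCompMv hΦK _
  have hp1K : ∀ m, MvPowerSeries.coeff (R := A ⧸ I) m p1 ∈ K := by
    rw [hp1d]; exact aux_memK_psCompMv hΦK _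
  have hp2K : ∀ m, MvPowerSeries.coeff (R := A ⧸ I) m p2 ∈ K := by
    rw [hp2d]; exact aux_memK_psCompMv hΦK _
  have hq0K : ∀ m, MvPowerSeries.coeff (R := A ⧸ I) m q0 ∈ K := by
    rw [hq0d]; exact aux_memK_psCompMv hΓK _
  have hq1K : ∀ m, MvPowerSeries.coeff (R := A ⧸ I) m q1 ∈ K := by
    rw [hq1d]; exact aux_memK_psCompMv hΓK _
  have hCaK : ∀ m, MvPowerSeries.coeff (R := A ⧸ I) m (C (σ := Fin 2) (R := A ⧸ I) (π a)) ∈ K := by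
    intro m
    rw [← monomial_zero_eq_C_apply, coeff_monomial]
    split
    · exact hKmem _ ha
    · exact zero_mem K
  have hz1 : p0 * q1 = 0 := aux_mul_eq_zero hKK hp0K hq1K
  have hz2 : p1 * q0 = 0 := aux_mul_eq_zero hKK hp1K hq0K
  have hz3 : C (σ := Fin 2) (R := A ⧸ I) (π a) * p0 = 0 := aux_mul_eq_zero hKK hCaK hp0K
  have hz4 : C (σ := Fin 2) (R := A ⧸ I) (π a) * p1 = 0 := aux_mul_eq_zero hKK hCaK hp1K
  have hWK : ∀ m, MvPowerSeries.coeff (R := A ⧸ I) m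
      (p2 - p0 - p1 - q1 * X 0 - q0 * X 1 + C (σ := Fin 2) (R := A ⧸ I) (π a) * (X 0 * X 1)) ∈ K := by
    intro m
    rw [map_add, map_sub, map_sub, map_sub, map_sub]
    exact add_mem (sub_mem (sub_mem (sub_mem (sub_mem (hp2K m) (hp0K m)) (hp1K m))
      (aux_memK_mul' hq1K _ m)) (aux_memK_mul' hq0K _ m)) (aux_memK_mul' hCaK _ m)
  have hNK : ∀ m, MvPowerSeries.coeff (R := A ⧸ I) m (p0 - p1 + q1 * X 0 - q0 * X 1) ∈ K := by
    intro m
    rw [map_sub, map_add, map_sub]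
    exact sub_mem (add_mem (sub_mem (hp0K m) (hp1K m)) (aux_memK_mul' hq1K _ m))
      (aux_memK_mul' hq0K _ m)
  have hWN : (p2 - p0 - p1 - q1 * X 0 - q0 * X 1 + C (σ := Fin 2) (R := A ⧸ I) (π a) * (X 0 * X 1))
      * (p0 - p1 + q1 * X 0 - q0 * X 1) = 0 := aux_mul_eq_zero hKK hWK hNK
  have hMK : ∀ m, MvPowerSeries.coeff (R := A ⧸ I) m
      ((X 0 + p0) ^ 2 * (X 1 + p1) ^ 2 - (X 0 : MvPowerSeries (Fin 2) (A ⧸ I)) ^ 2 * X 1 ^ 2)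
      ∈ K := by
    intro m
    rw [show (X 0 + p0) ^ 2 * (X 1 + p1) ^ 2
          - (X 0 : MvPowerSeries (Fin 2) (A ⧸ I)) ^ 2 * X 1 ^ 2
        = p0 * ((2 * X 0 + p0) * (X 1 + p1) ^ 2) + p1 * (X 0 ^ 2 * (2 * X 1 + p1)) from by ring,
      map_add]
    exact add_mem (aux_memK_mul' hp0K _ m) (aux_memK_mul' hp1K _ m)
  have hrK : ∀ m, MvPowerSeries.coeff (R := A ⧸ I) m (r0 - r1) ∈ K := by
    intro m
    rw [map_sub, hr0d, hr1d]
    exact sub_mem (aux_memK_psCompMv hΔK _ m) (aux_memK_psCompMv hΔK _ m)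
  have hr6 : (r0 - r1) * ((X 0 + p0) ^ 2 * (X 1 + p1) ^ 2
      - (X 0 : MvPowerSeries (Fin 2) (A ⧸ I)) ^ 2 * X 1 ^ 2) = 0 :=
    aux_mul_eq_zero hKK hrK hMK
  have key : (p2 - p0 - p1 - q1 * X 0 - q0 * X 1 + C (σ := Fin 2) (R := A ⧸ I) (π a) * (X 0 * X 1)) * X 0
      - (p2 - p0 - p1 - q1 * X 0 - q0 * X 1 + C (σ := Fin 2) (R := A ⧸ I) (π a) * (X 0 * X 1)) * X 1
      + (r0 - r1) * ((X 0 : MvPowerSeries (Fin 2) (A ⧸ I)) ^ 2 * X 1 ^ 2) = 0 := by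
    linear_combination hexpB
      + (((X 0 + p0) * (1 + q1) - (X 1 + p1) * (1 + q0))
          - (p2 - p0 - p1 - q1 * X 0 - q0 * X 1 + C (σ := Fin 2) (R := A ⧸ I) (π a) * (X 0 * X 1))) * hz1
      + (((X 0 + p0) * (1 + q1) - (X 1 + p1) * (1 + q0))
          + (p2 - p0 - p1 - q1 * X 0 - q0 * X 1 + C (σ := Fin 2) (R := A ⧸ I) (π a) * (X 0 * X 1))) * hz2
      - ((X 1 + p1) * ((X 0 + p0) * (1 + q1) - (X 1 + p1) * (1 + q0))) * hz3
      - (X 0 * ((X 0 + p0) * (1 + q1) - (X 1 + p1) * (1 + q0))) * hz4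
      - hWN - hr6
  have hWc : ∀ x y : ℕ, MvPowerSeries.coeff (R := A ⧸ I) (mon x y)
      (p2 - p0 - p1 - q1 * X 0 - q0 * X 1 + C (σ := Fin 2) (R := A ⧸ I) (π a) * (X 0 * X 1))
      = (Nat.choose (x + y) x : A ⧸ I) * PowerSeries.coeff (R := A ⧸ I) (x + y) φ
        - (if y = 0 then PowerSeries.coeff (R := A ⧸ I) x φ else 0)
        - (if x = 0 then PowerSeries.coeff (R := A ⧸ I) y φ else 0)
        - (if x = 1 then PowerSeries.coeff (R := A ⧸ I) y γ else 0)
        - (if y = 1 then PowerSeries.coeff (R := A ⧸ I) x γ else 0)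
        + (if x = 1 ∧ y = 1 then π a else 0) := by
    intro x y
    have e1 : (if 1 ≤ x then MvPowerSeries.coeff (R := A ⧸ I) (mon (x - 1) y) q1 else 0)
        = if x = 1 then PowerSeries.coeff (R := A ⧸ I) y γ else 0 := by
      rw [hq1d, aux_coeff_psCompMv_X1_mon]
      rcases Nat.lt_or_ge x 1 with h | h
      · rw [if_neg (by omega), if_neg (by omega)]
      · by_cases hx1 : x = 1
        · rw [if_pos h, if_pos (by omega), if_pos hx1]
        · rw [if_pos h, if_neg (by omega), if_neg hx1]
    have e2 : (if 1 ≤ y then MvPowerSeries.coeff (R := A ⧸ I) (mon x (y - 1)) q0 else 0)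
        = if y = 1 then PowerSeries.coeff (R := A ⧸ I) x γ else 0 := by
      rw [hq0d, aux_coeff_psCompMv_X0_mon]
      rcases Nat.lt_or_ge y 1 with h | h
      · rw [if_neg (by omega), if_neg (by omega)]
      · by_cases hy1 : y = 1
        · rw [if_pos h, if_pos (by omega), if_pos hy1]
        · rw [if_pos h, if_neg (by omega), if_neg hy1]
    rw [map_add, map_sub, map_sub, map_sub, map_sub, hp2d, aux_coeff_psCompMv_X01, hp0d,
      aux_coeff_psCompMv_X0_mon, hp1d, aux_coeff_psCompMv_X1_mon, aux_coeff_mul_X0,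
      aux_coeff_mul_X1, aux_coeff_C_mul_X01, e1, e2]
  -- coefficient extraction at small monomials
  have h21 := congrArg (MvPowerSeries.coeff (R := A ⧸ I) (mon 2 1)) key
  rw [map_add, map_sub, aux_coeff_mul_X0, aux_coeff_mul_X1, aux_coeff_mul_M22, map_zero] at h21
  norm_num only at h21
  rw [hWc, hWc] at h21
  norm_num only [hΓ1, hΦ0, hΦ1, Nat.choose_one_right, Nat.choose_self,
    hΦv 2 (by norm_num)] at h21
  norm_num at h21
  have h31 := congrArg (MvPowerSeries.coeff (R := A ⧸ I) (mon 3 1)) key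
  rw [map_add, map_sub, aux_coeff_mul_X0, aux_coeff_mul_X1, aux_coeff_mul_M22, map_zero] at h31
  norm_num only at h31
  rw [hWc, hWc] at h31
  norm_num only [hΓ1, hΦ0, hΦ1, Nat.choose_one_right, Nat.choose_self,
    hΦv 3 (by norm_num), hΓv 2 (by norm_num), show Nat.choose 3 2 = 3 from rfl] at h31
  norm_num at h31
  have h41 := congrArg (MvPowerSeries.coeff (R := A ⧸ I) (mon 4 1)) key
  rw [map_add, map_sub, aux_coeff_mul_X0, aux_coeff_mul_X1, aux_coeff_mul_M22, map_zero] at h41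
  norm_num only at h41
  rw [hWc, hWc] at h41
  norm_num only [hΓ1, hΦ0, hΦ1, Nat.choose_one_right, Nat.choose_self,
    hΦv 4 (by norm_num), hΓv 3 (by norm_num), show Nat.choose 4 3 = 4 from rfl] at h41
  norm_num at h41
  have h32 := congrArg (MvPowerSeries.coeff (R := A ⧸ I) (mon 3 2)) key
  rw [map_add, map_sub, aux_coeff_mul_X0, aux_coeff_mul_X1, aux_coeff_mul_M22, map_sub,
    hr0d, hr1d, aux_coeff_psCompMv_X0_mon, aux_coeff_psCompMv_X1_mon, map_zero] at h32
  norm_num only at h32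
  rw [hWc, hWc] at h32
  norm_num only [hΓ1, hΦ0, hΦ1, Nat.choose_one_right, Nat.choose_self,
    hΦv 4 (by norm_num), hΓv 3 (by norm_num), hΔv 1 (by norm_num),
    show Nat.choose 4 2 = 6 from rfl, show Nat.choose 4 3 = 4 from rfl] at h32
  norm_num at h32
  have h51 := congrArg (MvPowerSeries.coeff (R := A ⧸ I) (mon 5 1)) key
  rw [map_add, map_sub, aux_coeff_mul_X0, aux_coeff_mul_X1, aux_coeff_mul_M22, map_zero] at h51
  norm_num only at h51
  rw [hWc, hWc] at h51
  norm_num only [hΓ1, hΦ0, hΦ1, Nat.choose_one_right, Nat.choose_self,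
    hΦv 5 (by norm_num), hΓv 4 (by norm_num), show Nat.choose 5 4 = 5 from rfl] at h51
  norm_num at h51
  have h42 := congrArg (MvPowerSeries.coeff (R := A ⧸ I) (mon 4 2)) key
  rw [map_add, map_sub, aux_coeff_mul_X0, aux_coeff_mul_X1, aux_coeff_mul_M22, map_sub,
    hr0d, hr1d, aux_coeff_psCompMv_X0_mon, aux_coeff_psCompMv_X1_mon, map_zero] at h42
  norm_num only at h42
  rw [hWc, hWc] at h42
  norm_num only [hΓ1, hΦ0, hΦ1, Nat.choose_one_right, Nat.choose_self,
    hΦv 5 (by norm_num), hΓv 4 (by norm_num), hΔv 2 (by norm_num),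
    show Nat.choose 5 3 = 10 from rfl, show Nat.choose 5 4 = 5 from rfl] at h42
  norm_num at h42
  refine ⟨?_, ?_, ?_, ?_, ?_, ?_, ?_⟩
  · apply hmem0
    rw [map_add, map_mul, map_ofNat]
    linear_combination h21
  · apply hmem0
    rw [map_sub, map_mul, map_ofNat]
    linear_combination h31
  · apply hmem0
    rw [map_sub, map_mul, map_ofNat]
    linear_combination h41
  · apply hmem0
    rw [map_add, map_mul, map_ofNat]
    linear_combination h32 + h41
  · apply hmem0
    rw [map_sub, map_mul, map_ofNat]
    linear_combination h51
  · apply hmem0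
    rw [map_add, map_mul, map_ofNat]
    linear_combination h42 + h51
  · intro k hk
    obtain ⟨j, rfl⟩ : ∃ j, k = j + 5 := ⟨k - 5, by omega⟩
    have hg := congrArg (MvPowerSeries.coeff (R := A ⧸ I) (mon 3 (j + 4))) key
    rw [map_add, map_sub, aux_coeff_mul_X0, aux_coeff_mul_X1, aux_coeff_mul_M22, map_sub,
      hr0d, hr1d, aux_coeff_psCompMv_X0_mon, aux_coeff_psCompMv_X1_mon, map_zero] at hg
    rw [if_pos (by norm_num : (1:ℕ) ≤ 3), if_pos (by omega : 1 ≤ j + 4),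
      if_pos (by omega : 2 ≤ 3 ∧ 2 ≤ j + 4)] at hg
    rw [show (3:ℕ) - 1 = 2 from rfl, show j + 4 - 1 = j + 3 from by omega,
      show (3:ℕ) - 2 = 1 from rfl, show j + 4 - 2 = j + 2 from by omega] at hg
    rw [if_neg (by omega : ¬ j + 2 = 0), if_neg (by norm_num : ¬ (1:ℕ) = 0)] at hg
    rw [hWc, hWc] at hg
    rw [if_neg (by omega : ¬ j + 4 = 0), if_neg (by norm_num : ¬ (2:ℕ) = 0),
      if_neg (by norm_num : ¬ (2:ℕ) = 1), if_neg (by omega : ¬ j + 4 = 1),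
      if_neg (by omega : ¬ ((2:ℕ) = 1 ∧ j + 4 = 1)), if_neg (by omega : ¬ j + 3 = 0),
      if_neg (by norm_num : ¬ (3:ℕ) = 0), if_neg (by norm_num : ¬ (3:ℕ) = 1),
      if_neg (by omega : ¬ j + 3 = 1), if_neg (by omega : ¬ ((3:ℕ) = 1 ∧ j + 3 = 1))] at hg
    rw [show 2 + (j + 4) = j + 6 from by omega, show 3 + (j + 3) = j + 6 from by omega] at hg
    have hchoose : Nat.choose (j + 6) 2 < Nat.choose (j + 6) 3 := by
      have e := Nat.choose_succ_right_eq (j + 6) 2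
      rw [show j + 6 - 2 = j + 4 from by omega] at e
      have hp := Nat.choose_pos (show 2 ≤ j + 6 by omega)
      nlinarith [e, hp]
    have hqne : ((Nat.choose (j + 6) 3 : ℚ) - (Nat.choose (j + 6) 2 : ℚ)) ≠ 0 := by
      have hlt : ((Nat.choose (j + 6) 2 : ℚ)) < ((Nat.choose (j + 6) 3 : ℚ)) := by
        exact_mod_cast hchoose
      linarith
    have hzero : PowerSeries.coeff (R := A ⧸ I) (j + 6) φ = 0 := by
      have h2 : (algebraMap ℚ (A ⧸ I)) ((Nat.choose (j + 6) 3 : ℚ) - (Nat.choose (j + 6) 2 : ℚ))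
          * PowerSeries.coeff (R := A ⧸ I) (j + 6) φ = 0 := by
        rw [map_sub, map_natCast, map_natCast]
        linear_combination -hg
      have h3 := congrArg (fun z => (algebraMap ℚ (A ⧸ I))
        ((Nat.choose (j + 6) 3 : ℚ) - (Nat.choose (j + 6) 2 : ℚ))⁻¹ * z) h2
      simp only [mul_zero] at h3
      rw [← mul_assoc, ← map_mul, inv_mul_cancel₀ hqne, map_one, one_mul] at h3
      exact h3
    apply hmem0
    have hv := hΦv (j + 6) (by omega)
    rw [show j + 6 - 1 = j + 5 from by omega] at hv
    rw [← hv]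
    exact hzero
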